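/- arXiv:math/0506384 — 2 statements merged into one kernel-verified Lean document; each statement's English description precedes it below -/
import Mathlib

section
/- Accuracy Lemma: for every real x with 0 < x ≤ 1, the discrepancy Δ(x) := B(x) − A(x) satisfies (3/2^17)·x^5 < Δ(x) ≤ (4/π − 14/11)·x^5; moreover the upper bound is attained at x = 1, i.e., B(1) − A(1) = 4/π − 14/11. -/
open Real

/-- The series `B(x) = ∑ ((1/(2n-1))·(1/4ⁿ)·C(2n,n))²·xⁿ`. -/
noncomputable def Bfun (x : ℝ) : ℝ :=
  ∑' n : ℕ, ((1 / (2 * (n : ℝ) - 1)) * (1 / 4 ^ n) * (Nat.choose (2 * n) n)) ^ 2 * x ^ n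

/-- The function `A(x) = 1 + 3x/(10 + √(4 - 3x))`. -/
noncomputable def Afun (x : ℝ) : ℝ := 1 + 3 * x / (10 + Real.sqrt (4 - 3 * x))

open Finset

noncomputable def aa (n : ℕ) : ℝ :=
  (1 / (2 * (n : ℝ) - 1)) * (1 / 4 ^ n) * (Nat.choose (2 * n) n)

lemma aa_zero : aa 0 = -1 := by simp [aa]

lemma aa_one : aa 1 = 1/2 := by norm_num [aa]

lemma two_n_sub_one_ne (n : ℕ) : 2 * (n:ℝ) - 1 ≠ 0 := by
  intro h
  have : (2*(n:ℝ)) = 1 := by linarith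
  rcases Nat.eq_zero_or_pos n with h0 | h1
  · simp [h0] at this
  · have : (1:ℝ) ≤ (n:ℝ) := by exact_mod_cast h1
    linarith

lemma aa_rec (n : ℕ) : (2*(n:ℝ)+2) * aa (n+1) = (2*(n:ℝ)-1) * aa n := by
  have h := Nat.succ_mul_centralBinom_succ n
  have hc : ∀ m : ℕ, Nat.choose (2*m) m = Nat.centralBinom m := fun m => rfl
  have hcast : ((n+1 : ℕ) : ℝ) * (Nat.centralBinom (n+1) : ℝ)
      = 2 * (2*(n:ℝ)+1) * (Nat.centralBinom n : ℝ) := by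
    exact_mod_cast congrArg (Nat.cast : ℕ → ℝ) h
  simp only [aa, hc]
  have h1 : (2*((n:ℝ)+1)-1) ≠ 0 := by
    have := two_n_sub_one_ne (n+1); push_cast at this ⊢; linarith [this]
  have h2 : (2*(n:ℝ)-1) ≠ 0 := two_n_sub_one_ne n
  have h4 : ((4:ℝ))^(n+1) = 4 * 4^n := by ring
  push_cast
  rw [h4]
  field_simp
  push_cast at hcast
  linear_combination 2 * hcast

lemma aa_pos {n : ℕ} (hn : 1 ≤ n) : 0 < aa n := by
  have h1 : (0:ℝ) < 2 * (n:ℝ) - 1 := by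
    have : (1:ℝ) ≤ (n:ℝ) := by exact_mod_cast hn
    linarith
  have h2 : (0:ℝ) < (Nat.choose (2*n) n : ℝ) := by
    exact_mod_cast Nat.choose_pos (by omega)
  have h3 : (0:ℝ) < 4 ^ n := by positivity
  unfold aa
  positivity

lemma aa_succ_le {n : ℕ} (hn : 1 ≤ n) : aa (n+1) ≤ aa n := by
  have h := aa_rec n
  have hp := aa_pos hn
  have h1 : (1:ℝ) ≤ (n:ℝ) := by exact_mod_cast hn
  nlinarith

lemma aa_le_half {n : ℕ} (hn : 1 ≤ n) : aa n ≤ 1/2 := by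
  induction n with
  | zero => omega
  | succ m ih =>
    rcases Nat.eq_zero_or_pos m with h0 | h1
    · subst h0; rw [aa_one]
    · exact le_trans (aa_succ_le h1) (ih h1)

lemma abs_aa_le_one (n : ℕ) : |aa n| ≤ 1 := by
  rcases Nat.eq_zero_or_pos n with h0 | h1
  · subst h0; rw [aa_zero]; norm_num
  · rw [abs_of_pos (aa_pos h1)]; linarith [aa_le_half h1]

lemma sum_range_aa (n : ℕ) : ∑ k ∈ range n, aa k = -2*(n:ℝ)*aa n := by
  induction n with
  | zero => simp
  | succ m ih =>
    rw [Finset.sum_range_succ, ih]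
    have h := aa_rec m
    push_cast
    linarith

lemma summable_aa_succ : Summable (fun n => aa (n+1)) := by
  apply summable_of_sum_range_le (c := 1) (fun n => le_of_lt (aa_pos (by omega)))
  intro n
  have : ∑ k ∈ range n, aa (k+1) = (∑ k ∈ range (n+1), aa k) - aa 0 := by
    rw [Finset.sum_range_succ' (fun k => aa k) n]; ring
  rw [this, sum_range_aa, aa_zero]
  have : 0 ≤ aa (n+1) := by
    rcases Nat.eq_zero_or_pos n with h0 | h1
    · subst h0; rw [aa_one]; norm_num
    · exact le_of_lt (aa_pos (by omega))
  push_cast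
  nlinarith [this]

lemma tsum_aa_succ_le : ∑' n, aa (n+1) ≤ 1 := by
  apply Real.tsum_le_of_sum_range_le (fun n => le_of_lt (aa_pos (by omega)))
  intro n
  have : ∑ k ∈ range n, aa (k+1) = (∑ k ∈ range (n+1), aa k) - aa 0 := by
    rw [Finset.sum_range_succ' (fun k => aa k) n]; ring
  rw [this, sum_range_aa, aa_zero]
  have h2 : 0 ≤ aa (n+1) := by
    rcases Nat.eq_zero_or_pos n with h0 | h1
    · subst h0; rw [aa_one]; norm_num
    · exact le_of_lt (aa_pos (by omega))
  push_cast
  nlinarith [h2]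

lemma sum_range_aa_sq (n : ℕ) :
    ∑ k ∈ range n, (aa k)^2 = 4*(n:ℝ)^2*(4*(n:ℝ)-3)*(aa n)^2 := by
  induction n with
  | zero => simp
  | succ m ih =>
    rw [Finset.sum_range_succ, ih]
    have h := aa_rec m
    push_cast
    linear_combination (-(4*(m:ℝ)+1) * ((2*(m:ℝ)+2)*aa (m+1) + (2*(m:ℝ)-1)*aa m)) * h

noncomputable def Sconv (n : ℕ) : ℝ := ∑ p ∈ Finset.HasAntidiagonal.antidiagonal n, aa p.1 * aa p.2

lemma Sconv_swap_weighted (n : ℕ) :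
    ∑ p ∈ Finset.HasAntidiagonal.antidiagonal n, (p.1 : ℝ) * (aa p.1 * aa p.2)
      = ∑ p ∈ Finset.HasAntidiagonal.antidiagonal n, (p.2 : ℝ) * (aa p.1 * aa p.2) := by
  rw [← Finset.Nat.sum_antidiagonal_swap (f := fun p => (p.1 : ℝ) * (aa p.1 * aa p.2))]
  apply Finset.sum_congr rfl
  intro p _
  simp only [Prod.fst_swap, Prod.snd_swap]
  ring

lemma Sconv_swap_weighted' (n : ℕ) :
    ∑ p ∈ Finset.HasAntidiagonal.antidiagonal n, (2*(p.1 : ℝ)-1) * (aa p.1 * aa p.2)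
      = ∑ p ∈ Finset.HasAntidiagonal.antidiagonal n, (2*(p.2 : ℝ)-1) * (aa p.1 * aa p.2) := by
  rw [← Finset.Nat.sum_antidiagonal_swap (f := fun p => (2*(p.1 : ℝ)-1) * (aa p.1 * aa p.2))]
  apply Finset.sum_congr rfl
  intro p _
  simp only [Prod.fst_swap, Prod.snd_swap]
  ring

lemma Sconv_key (n : ℕ) : ((n:ℝ)+1) * Sconv (n+1) = ((n:ℝ)-1) * Sconv n := by
  have h1 : ((n:ℝ)+1) * Sconv (n+1)
      = ∑ p ∈ Finset.HasAntidiagonal.antidiagonal (n+1), ((p.1 : ℝ) + (p.2 : ℝ)) * (aa p.1 * aa p.2) := by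
    rw [Sconv, Finset.mul_sum]
    apply Finset.sum_congr rfl
    intro p hp
    have := Finset.HasAntidiagonal.mem_antidiagonal.mp hp
    have hcast : (p.1 : ℝ) + (p.2 : ℝ) = (n:ℝ) + 1 := by exact_mod_cast congrArg (Nat.cast : ℕ → ℝ) this
    rw [hcast]
  have h2 : ∑ p ∈ Finset.HasAntidiagonal.antidiagonal (n+1), ((p.1 : ℝ) + (p.2 : ℝ)) * (aa p.1 * aa p.2)
      = 2 * ∑ p ∈ Finset.HasAntidiagonal.antidiagonal (n+1), (p.1 : ℝ) * (aa p.1 * aa p.2) := by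
    calc ∑ p ∈ Finset.HasAntidiagonal.antidiagonal (n+1), ((p.1 : ℝ) + (p.2 : ℝ)) * (aa p.1 * aa p.2)
        = ∑ p ∈ Finset.HasAntidiagonal.antidiagonal (n+1), ((p.1 : ℝ) * (aa p.1 * aa p.2)
            + (p.2 : ℝ) * (aa p.1 * aa p.2)) := by
          apply Finset.sum_congr rfl; intro p _; ring
      _ = (∑ p ∈ Finset.HasAntidiagonal.antidiagonal (n+1), (p.1 : ℝ) * (aa p.1 * aa p.2))
            + ∑ p ∈ Finset.HasAntidiagonal.antidiagonal (n+1), (p.2 : ℝ) * (aa p.1 * aa p.2) :=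
          Finset.sum_add_distrib
      _ = 2 * ∑ p ∈ Finset.HasAntidiagonal.antidiagonal (n+1), (p.1 : ℝ) * (aa p.1 * aa p.2) := by
          rw [← Sconv_swap_weighted (n+1)]; ring
  have h3 : (2:ℝ) * ∑ p ∈ Finset.HasAntidiagonal.antidiagonal (n+1), (p.1 : ℝ) * (aa p.1 * aa p.2)
      = ∑ p ∈ Finset.HasAntidiagonal.antidiagonal n, (2*(p.1:ℝ)-1) * (aa p.1 * aa p.2) := by
    rw [Finset.Nat.sum_antidiagonal_succ
      (f := fun p => (p.1 : ℝ) * (aa p.1 * aa p.2))]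
    simp only [Nat.cast_zero, zero_mul, zero_add]
    rw [Finset.mul_sum]
    apply Finset.sum_congr rfl
    intro p _
    have h := aa_rec p.1
    push_cast
    linear_combination (aa p.2) * h
  have h4 : ∑ p ∈ Finset.HasAntidiagonal.antidiagonal n, (2*(p.1:ℝ)-1) * (aa p.1 * aa p.2)
      = ((n:ℝ)-1) * Sconv n := by
    have key : (2:ℝ) * ∑ p ∈ Finset.HasAntidiagonal.antidiagonal n, (2*(p.1:ℝ)-1) * (aa p.1 * aa p.2)
        = 2 * (((n:ℝ)-1) * Sconv n) := by
      calc (2:ℝ) * ∑ p ∈ Finset.HasAntidiagonal.antidiagonal n, (2*(p.1:ℝ)-1) * (aa p.1 * aa p.2)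
          = (∑ p ∈ Finset.HasAntidiagonal.antidiagonal n, (2*(p.1:ℝ)-1) * (aa p.1 * aa p.2))
            + ∑ p ∈ Finset.HasAntidiagonal.antidiagonal n, (2*(p.2:ℝ)-1) * (aa p.1 * aa p.2) := by
            rw [← Sconv_swap_weighted' n]; ring
        _ = ∑ p ∈ Finset.HasAntidiagonal.antidiagonal n, (2*((p.1:ℝ)+(p.2:ℝ))-2) * (aa p.1 * aa p.2) := by
            rw [← Finset.sum_add_distrib]
            apply Finset.sum_congr rfl; intro p _; ring
        _ = 2 * (((n:ℝ)-1) * Sconv n) := by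
            rw [Sconv, Finset.mul_sum, Finset.mul_sum]
            apply Finset.sum_congr rfl
            intro p hp
            have := Finset.HasAntidiagonal.mem_antidiagonal.mp hp
            have hcast : (p.1 : ℝ) + (p.2 : ℝ) = (n:ℝ) := by
              exact_mod_cast congrArg (Nat.cast : ℕ → ℝ) this
            rw [hcast]; ring
    linarith
  rw [h1, h2, h3, h4]

lemma Sconv_zero : Sconv 0 = 1 := by simp [Sconv, aa_zero]

lemma Sconv_one : Sconv 1 = -1 := by
  rw [Sconv, Finset.Nat.sum_antidiagonal_succ]
  simp [aa_zero, aa_one]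
  norm_num

lemma Sconv_eq_zero {n : ℕ} (hn : 2 ≤ n) : Sconv n = 0 := by
  induction n with
  | zero => omega
  | succ m ih =>
    rcases Nat.lt_or_ge m 2 with h | h
    · interval_cases m
      · omega
      · have := Sconv_key 1
        rw [Sconv_one] at this
        push_cast at this
        linarith
    · have := Sconv_key m
      rw [ih h] at this
      have hm : (0:ℝ) < (m:ℝ)+1 := by positivity
      rcases mul_eq_zero.mp (by linarith [this] : ((m:ℝ)+1) * Sconv (m+1) = 0) with h' | h'
      · linarith
      · exact h'

lemma summable_norm_aa_pow {t : ℝ} (h0 : 0 ≤ t) (h1 : t < 1) :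
    Summable (fun n => ‖aa n * t^n‖) := by
  refine Summable.of_nonneg_of_le (fun n => norm_nonneg _) (fun n => ?_)
    (summable_geometric_of_lt_one h0 h1)
  rw [norm_mul, norm_pow]
  have h2 : ‖t‖ = t := by rw [Real.norm_eq_abs, abs_of_nonneg h0]
  calc ‖aa n‖ * ‖t‖^n ≤ 1 * ‖t‖^n := by
        apply mul_le_mul_of_nonneg_right _ (by positivity)
        rw [Real.norm_eq_abs]; exact abs_aa_le_one n
    _ = t^n := by rw [one_mul, h2]

lemma hasSum_aa_sqrt {t : ℝ} (h0 : 0 ≤ t) (h1 : t < 1) :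
    HasSum (fun n => aa n * t^n) (-Real.sqrt (1-t)) := by
  have hnorm := summable_norm_aa_pow h0 h1
  have hsum : Summable (fun n => aa n * t^n) := hnorm.of_norm
  set F := ∑' n, aa n * t^n with hFdef
  have hFsq : F * F = 1 - t := by
    rw [hFdef, tsum_mul_tsum_eq_tsum_sum_antidiagonal_of_summable_norm hnorm hnorm]
    have hc : ∀ n, (∑ kl ∈ Finset.HasAntidiagonal.antidiagonal n, (aa kl.1 * t^kl.1) * (aa kl.2 * t^kl.2))
        = Sconv n * t^n := by
      intro n
      rw [Sconv, Finset.sum_mul]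
      apply Finset.sum_congr rfl
      intro p hp
      have hmem := Finset.HasAntidiagonal.mem_antidiagonal.mp hp
      rw [← hmem, pow_add]
      ring
    rw [tsum_congr hc]
    rw [tsum_eq_sum (s := {0, 1}) (by
      intro n hn
      simp only [Finset.mem_insert, Finset.mem_singleton] at hn
      push_neg at hn
      rw [Sconv_eq_zero (by omega), zero_mul])]
    rw [Finset.sum_insert (by norm_num), Finset.sum_singleton]
    rw [Sconv_zero, Sconv_one]
    ring
  have hshift : HasSum (fun n => aa (n+1) * t^(n+1)) (F - (aa 0 * t^0)) := by
    apply (hasSum_nat_add_iff (f := fun n => aa n * t^n) 1).mpr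
    simpa using hsum.hasSum
  have htail : (∑' n, aa (n+1) * t^(n+1)) ≤ t := by
    have hle : ∀ n : ℕ, aa (n+1) * t^(n+1) ≤ aa (n+1) * t := by
      intro n
      apply mul_le_mul_of_nonneg_left _ (le_of_lt (aa_pos (by omega)))
      calc t^(n+1) ≤ t^1 := pow_le_pow_of_le_one h0 h1.le (by omega)
        _ = t := pow_one t
    calc (∑' n, aa (n+1) * t^(n+1)) ≤ ∑' n, aa (n+1) * t :=
          hshift.summable.tsum_le_tsum hle (summable_aa_succ.mul_right t)
      _ = (∑' n, aa (n+1)) * t := tsum_mul_right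
      _ ≤ 1 * t := mul_le_mul_of_nonneg_right tsum_aa_succ_le h0
      _ = t := one_mul t
  have hF_le : F ≤ t - 1 := by
    have h5 := hshift.tsum_eq
    rw [aa_zero] at h5
    simp at h5
    linarith [htail]
  have hFneg : 0 ≤ -F := by linarith
  have hsq : Real.sqrt (1-t) = -F := by
    rw [show (1:ℝ)-t = (-F)^2 by nlinarith [hFsq]]
    exact Real.sqrt_sq hFneg
  have hFeq : F = -Real.sqrt (1-t) := by linarith [hsq]
  exact hFeq ▸ hsum.hasSum

lemma hasSum_sqrt_4_sub {x : ℝ} (h0 : 0 ≤ x) (h1 : x ≤ 1) :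
    HasSum (fun n => aa n * (3/4)^n * x^n) (-Real.sqrt (4-3*x)/2) := by
  have ht0 : (0:ℝ) ≤ 3*x/4 := by linarith
  have ht1 : 3*x/4 < 1 := by linarith
  have h := hasSum_aa_sqrt ht0 ht1
  have heq : ∀ n : ℕ, aa n * (3*x/4)^n = aa n * (3/4)^n * x^n := by
    intro n
    rw [show (3*x/4) = (3/4)*x by ring, mul_pow]
    ring
  rw [show (1 - 3*x/4) = (4-3*x)/4 by ring] at h
  have hsq : Real.sqrt ((4-3*x)/4) = Real.sqrt (4-3*x) / 2 := by
    rw [show ((4:ℝ)-3*x)/4 = (4-3*x) * (1/2)^2 by ring]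
    rw [Real.sqrt_mul (by linarith), Real.sqrt_sq (by norm_num)]
    ring
  rw [hsq] at h
  rw [show -Real.sqrt (4-3*x)/2 = -(Real.sqrt (4-3*x)/2) by ring]
  exact (funext heq : (fun n => aa n * (3*x/4)^n) = fun n => aa n * (3/4)^n * x^n) ▸ h

noncomputable def ee : ℕ → ℝ
  | 0 => 1
  | 1 => 1/4
  | (n+2) => (2 * aa (n+1) * (3/4)^(n+1) - ee (n+1)) / 32

lemma ee_zero : ee 0 = 1 := rfl
lemma ee_one : ee 1 = 1/4 := rfl
lemma ee_step (n : ℕ) : ee (n+2) = (2 * aa (n+1) * (3/4)^(n+1) - ee (n+1)) / 32 := rfl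

lemma abs_ee_le (n : ℕ) : |ee n| ≤ (3/4)^n := by
  induction n with
  | zero => rw [ee_zero]; norm_num
  | succ m ih =>
    match m, ih with
    | 0, _ => rw [ee_one, abs_of_pos (by norm_num : (0:ℝ) < 1/4)]; norm_num
    | (k+1), ih =>
      rw [ee_step]
      have h1 : |aa (k+1)| ≤ 1/2 := by
        rw [abs_of_pos (aa_pos (by omega))]; exact aa_le_half (by omega)
      have h2 : (0:ℝ) < (3/4)^(k+1) := by positivity
      calc |(2 * aa (k+1) * (3/4)^(k+1) - ee (k+1)) / 32|
          ≤ (|2 * aa (k+1) * (3/4)^(k+1)| + |ee (k+1)|) / 32 := by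
            rw [abs_div]
            have := abs_sub (2 * aa (k+1) * (3/4)^(k+1)) (ee (k+1))
            rw [show |(32:ℝ)| = 32 by norm_num]
            apply div_le_div_of_nonneg_right ?_ (by norm_num)
            exact abs_sub _ _
        _ ≤ ((3/4)^(k+1) + (3/4)^(k+1)) / 32 := by
            apply div_le_div_of_nonneg_right ?_ (by norm_num)
            have : |2 * aa (k+1) * (3/4)^(k+1)| = 2 * |aa (k+1)| * (3/4)^(k+1) := by
              rw [abs_mul, abs_mul]
              rw [show |(2:ℝ)| = 2 by norm_num, abs_of_pos h2]
            rw [this]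
            have := ih
            nlinarith [h1, h2, ih]
        _ ≤ (3/4)^(k+1+1) := by
            have hp : (0:ℝ) ≤ (3/4)^k := by positivity
            rw [pow_succ, pow_succ]
            nlinarith [hp, pow_succ (3/4:ℝ) k]

lemma summable_ee_pow {x : ℝ} (h1 : |x| ≤ 1) : Summable (fun n => ee n * x^n) := by
  apply Summable.of_norm
  refine Summable.of_nonneg_of_le (fun n => norm_nonneg _) (fun n => ?_)
    (summable_geometric_of_lt_one (by norm_num : (0:ℝ) ≤ 3/4) (by norm_num : (3:ℝ)/4 < 1))
  rw [norm_mul, norm_pow, Real.norm_eq_abs, Real.norm_eq_abs]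
  calc |ee n| * |x|^n ≤ (3/4)^n * 1 := by
        apply mul_le_mul (abs_ee_le n) ?_ (by positivity) (by positivity)
        exact pow_le_one₀ (abs_nonneg x) h1
    _ = (3/4)^n := mul_one _

lemma hasSum_ee_Afun {x : ℝ} (h0 : 0 ≤ x) (h1 : x ≤ 1) :
    HasSum (fun n => ee n * x^n) (Afun x) := by
  have hsble := summable_ee_pow (by rwa [abs_of_nonneg h0])
  set U := ∑' n, ee n * x^n with hUdef
  have hsum : HasSum (fun n => ee n * x^n) U := hsble.hasSum
  set s := Real.sqrt (4 - 3*x) with hsdef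
  have hs0 : 0 ≤ s := Real.sqrt_nonneg _
  have hs2 : s^2 = 4 - 3*x := Real.sq_sqrt (by linarith)
  have hc : ∑ i ∈ Finset.range 2, ee i * x^i = 1 + x/4 := by
    rw [Finset.sum_range_succ, Finset.sum_range_one, ee_zero, ee_one]
    ring
  have h2 : HasSum (fun n => ee (n+2) * x^(n+2)) (U - (1+x/4)) := by
    refine (hasSum_nat_add_iff (f := fun n => ee n * x^n) 2).mpr ?_
    rw [hc, sub_add_cancel]
    exact hsum
  have h1s : HasSum (fun n => ee (n+1) * x^(n+1)) (U - 1) := by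
    refine (hasSum_nat_add_iff (f := fun n => ee n * x^n) 1).mpr ?_
    rw [Finset.sum_range_one, ee_zero]
    simpa using hsum
  have hA := hasSum_sqrt_4_sub h0 h1
  have hA1 : HasSum (fun n => aa (n+1) * (3/4)^(n+1) * x^(n+1)) (-s/2 + 1) := by
    refine (hasSum_nat_add_iff (f := fun n => aa n * (3/4)^n * x^n) 1).mpr ?_
    rw [Finset.sum_range_one, aa_zero]
    simpa using hA
  have combo := ((hA1.mul_left 2).sub h1s).mul_right (x/32)
  have key : (fun n => (2 * (aa (n+1) * (3/4)^(n+1) * x^(n+1)) - ee (n+1) * x^(n+1)) * (x/32))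
      = fun n => ee (n+2) * x^(n+2) := by
    funext n
    rw [ee_step]
    ring
  rw [key] at combo
  have heq := h2.unique combo
  have hU32 : U * (32 + x) = 32 + 11*x - s*x := by nlinarith [heq]
  have h10 : (0:ℝ) < 10 + s := by linarith
  have h32 : (0:ℝ) < 32 + x := by linarith
  have hfinal : U = Afun x := by
    rw [Afun, ← hsdef]
    rw [show U = (32 + 11*x - s*x) / (32 + x) by field_simp at hU32 ⊢; linarith [hU32]]
    field_simp
    linear_combination (-x) * hs2
  exact hfinal ▸ hsum

lemma aa_rec' (n : ℕ) : aa (n+1) = (2*(n:ℝ)-1) / (2*(n:ℝ)+2) * aa n := by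
  have h := aa_rec n
  have hne : (2*(n:ℝ)+2) ≠ 0 := by positivity
  field_simp
  linarith [h]
lemma aaV1 : aa 1 = (1/2 : ℝ) := by rw [aa_one]

lemma aaV2 : aa 2 = (1/8 : ℝ) := by
  have h := aa_rec' 1
  rw [aaV1] at h
  norm_num at h
  exact h

lemma aaV3 : aa 3 = (1/16 : ℝ) := by
  have h := aa_rec' 2
  rw [aaV2] at h
  norm_num at h
  exact h

lemma aaV4 : aa 4 = (5/128 : ℝ) := by
  have h := aa_rec' 3
  rw [aaV3] at h
  norm_num at h
  exact h

lemma aaV5 : aa 5 = (7/256 : ℝ) := by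
  have h := aa_rec' 4
  rw [aaV4] at h
  norm_num at h
  exact h

lemma aaV6 : aa 6 = (21/1024 : ℝ) := by
  have h := aa_rec' 5
  rw [aaV5] at h
  norm_num at h
  exact h

lemma aaV7 : aa 7 = (33/2048 : ℝ) := by
  have h := aa_rec' 6
  rw [aaV6] at h
  norm_num at h
  exact h

lemma aaV8 : aa 8 = (429/32768 : ℝ) := by
  have h := aa_rec' 7
  rw [aaV7] at h
  norm_num at h
  exact h

lemma aaV9 : aa 9 = (715/65536 : ℝ) := by
  have h := aa_rec' 8
  rw [aaV8] at h
  norm_num at h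
  exact h

lemma aaV10 : aa 10 = (2431/262144 : ℝ) := by
  have h := aa_rec' 9
  rw [aaV9] at h
  norm_num at h
  exact h

lemma aaV11 : aa 11 = (4199/524288 : ℝ) := by
  have h := aa_rec' 10
  rw [aaV10] at h
  norm_num at h
  exact h

lemma aaV12 : aa 12 = (29393/4194304 : ℝ) := by
  have h := aa_rec' 11
  rw [aaV11] at h
  norm_num at h
  exact h

lemma aaV13 : aa 13 = (52003/8388608 : ℝ) := by
  have h := aa_rec' 12
  rw [aaV12] at h
  norm_num at h
  exact h

lemma aaV14 : aa 14 = (185725/33554432 : ℝ) := by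
  have h := aa_rec' 13
  rw [aaV13] at h
  norm_num at h
  exact h

lemma aaV15 : aa 15 = (334305/67108864 : ℝ) := by
  have h := aa_rec' 14
  rw [aaV14] at h
  norm_num at h
  exact h

lemma aaV16 : aa 16 = (9694845/2147483648 : ℝ) := by
  have h := aa_rec' 15
  rw [aaV15] at h
  norm_num at h
  exact h

lemma aaV17 : aa 17 = (17678835/4294967296 : ℝ) := by
  have h := aa_rec' 16
  rw [aaV16] at h
  norm_num at h
  exact h

lemma aaV18 : aa 18 = (64822395/17179869184 : ℝ) := by
  have h := aa_rec' 17
  rw [aaV17] at h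
  norm_num at h
  exact h

lemma aaV19 : aa 19 = (119409675/34359738368 : ℝ) := by
  have h := aa_rec' 18
  rw [aaV18] at h
  norm_num at h
  exact h

lemma aaV20 : aa 20 = (883631595/274877906944 : ℝ) := by
  have h := aa_rec' 19
  rw [aaV19] at h
  norm_num at h
  exact h

lemma aaV21 : aa 21 = (1641030105/549755813888 : ℝ) := by
  have h := aa_rec' 20
  rw [aaV20] at h
  norm_num at h
  exact h

lemma aaV22 : aa 22 = (6116566755/2199023255552 : ℝ) := by
  have h := aa_rec' 21
  rw [aaV21] at h
  norm_num at h
  exact h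

lemma aaV23 : aa 23 = (11435320455/4398046511104 : ℝ) := by
  have h := aa_rec' 22
  rw [aaV22] at h
  norm_num at h
  exact h

lemma aaV24 : aa 24 = (171529806825/70368744177664 : ℝ) := by
  have h := aa_rec' 23
  rw [aaV23] at h
  norm_num at h
  exact h

lemma aaV25 : aa 25 = (322476036831/140737488355328 : ℝ) := by
  have h := aa_rec' 24
  rw [aaV24] at h
  norm_num at h
  exact h

lemma aaV26 : aa 26 = (1215486600363/562949953421312 : ℝ) := by
  have h := aa_rec' 25
  rw [aaV25] at h
  norm_num at h
  exact h

lemma aaV27 : aa 27 = (2295919134019/1125899906842624 : ℝ) := by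
  have h := aa_rec' 26
  rw [aaV26] at h
  norm_num at h
  exact h

lemma aaV28 : aa 28 = (17383387729001/9007199254740992 : ℝ) := by
  have h := aa_rec' 27
  rw [aaV27] at h
  norm_num at h
  exact h

lemma aaV29 : aa 29 = (32968493968795/18014398509481984 : ℝ) := by
  have h := aa_rec' 28
  rw [aaV28] at h
  norm_num at h
  exact h

lemma aaV30 : aa 30 = (125280277081421/72057594037927936 : ℝ) := by
  have h := aa_rec' 29
  rw [aaV29] at h
  norm_num at h
  exact h

lemma aaV31 : aa 31 = (238436656380769/144115188075855872 : ℝ) := by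
  have h := aa_rec' 30
  rw [aaV30] at h
  norm_num at h
  exact h

lemma aaV32 : aa 32 = (14544636039226909/9223372036854775808 : ℝ) := by
  have h := aa_rec' 31
  rw [aaV31] at h
  norm_num at h
  exact h

lemma aaV33 : aa 33 = (27767032438524099/18446744073709551616 : ℝ) := by
  have h := aa_rec' 32
  rw [aaV32] at h
  norm_num at h
  exact h

lemma aaV34 : aa 34 = (106168065206121555/73786976294838206464 : ℝ) := by
  have h := aa_rec' 33
  rw [aaV33] at h
  norm_num at h
  exact h

lemma aaV35 : aa 35 = (203236010537432691/147573952589676412928 : ℝ) := by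
  have h := aa_rec' 34
  rw [aaV34] at h
  norm_num at h
  exact h

lemma aaV36 : aa 36 = (1558142747453650631/1180591620717411303424 : ℝ) := by
  have h := aa_rec' 35
  rw [aaV35] at h
  norm_num at h
  exact h

lemma aaV37 : aa 37 = (2989949596465113373/2361183241434822606848 : ℝ) := by
  have h := aa_rec' 36
  rw [aaV36] at h
  norm_num at h
  exact h

lemma aaV38 : aa 38 = (11487701081155435591/9444732965739290427392 : ℝ) := by
  have h := aa_rec' 37
  rw [aaV37] at h
  norm_num at h
  exact h

lemma eeV1 : ee 1 = (1/4 : ℝ) := ee_one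

lemma eeV2 : ee 2 = (1/64 : ℝ) := by
  have h := ee_step 0
  rw [aaV1, eeV1] at h
  norm_num at h
  exact h

lemma eeV3 : ee 3 = (1/256 : ℝ) := by
  have h := ee_step 1
  rw [aaV2, eeV2] at h
  norm_num at h
  exact h

lemma eeV4 : ee 4 = (25/16384 : ℝ) := by
  have h := ee_step 2
  rw [aaV3, eeV3] at h
  norm_num at h
  exact h

lemma eeV5 : ee 5 = (95/131072 : ℝ) := by
  have h := ee_step 3
  rw [aaV4, eeV4] at h
  norm_num at h
  exact h

lemma eeV6 : ee 6 = (803/2097152 : ℝ) := by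
  have h := ee_step 4
  rw [aaV5, eeV5] at h
  norm_num at h
  exact h

lemma eeV7 : ee 7 = (7253/33554432 : ℝ) := by
  have h := ee_step 5
  rw [aaV6, eeV6] at h
  norm_num at h
  exact h

lemma eeV8 : ee 8 = (137089/1073741824 : ℝ) := by
  have h := ee_step 6
  rw [aaV7, eeV7] at h
  norm_num at h
  exact h

lemma eeV9 : ee 9 = (669395/8589934592 : ℝ) := by
  have h := ee_step 7
  rw [aaV8, eeV8] at h
  norm_num at h
  exact h

lemma eeV10 : ee 10 = (6701975/137438953472 : ℝ) := by
  have h := ee_step 8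
  rw [aaV9, eeV9] at h
  norm_num at h
  exact h

lemma eeV11 : ee 11 = (2138221/68719476736 : ℝ) := by
  have h := ee_step 9
  rw [aaV10, eeV10] at h
  norm_num at h
  exact h

lemma eeV12 : ee 12 = (709628717/35184372088832 : ℝ) := by
  have h := ee_step 10
  rw [aaV11, eeV11] at h
  norm_num at h
  exact h

lemma eeV13 : ee 13 = (3727754149/281474976710656 : ℝ) := by
  have h := ee_step 11
  rw [aaV12, eeV12] at h
  norm_num at h
  exact h

lemma eeV14 : ee 14 = (19795456205/2251799813685248 : ℝ) := by
  have h := ee_step 12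
  rw [aaV13, eeV13] at h
  norm_num at h
  exact h

lemma eeV15 : ee 15 = (848726005115/144115188075855872 : ℝ) := by
  have h := ee_step 13
  rw [aaV14, eeV14] at h
  norm_num at h
  exact h

lemma eeV16 : ee 16 = (18338919413425/4611686018427387904 : ℝ) := by
  have h := ee_step 14
  rw [aaV15, eeV15] at h
  norm_num at h
  exact h

lemma eeV17 : ee 17 = (99748092109955/36893488147419103232 : ℝ) := by
  have h := ee_step 15
  rw [aaV16, eeV16] at h
  norm_num at h
  exact h

lemma eeV18 : ee 18 = (1091649770720075/590295810358705651712 : ℝ) := by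
  have h := ee_step 16
  rw [aaV17, eeV17] at h
  norm_num at h
  exact h

lemma eeV19 : ee 19 = (3002734274791385/2361183241434822606848 : ℝ) := by
  have h := ee_step 17
  rw [aaV18, eeV18] at h
  norm_num at h
  exact h

lemma eeV20 : ee 20 = (132779795489910455/151115727451828646838272 : ℝ) := by
  have h := ee_step 18
  rw [aaV19, eeV19] at h
  norm_num at h
  exact h

lemma eeV21 : ee 21 = (737063266546709785/1208925819614629174706176 : ℝ) := by
  have h := ee_step 19
  rw [aaV20, eeV20] at h
  norm_num at h
  exact h

lemma eeV22 : ee 22 = (8214345624254733265/19342813113834066795298816 : ℝ) := by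
  have h := ee_step 20
  rw [aaV21, eeV21] at h
  norm_num at h
  exact h

lemma eeV23 : ee 23 = (91865000158413982765/309485009821345068724781056 : ℝ) := by
  have h := ee_step 21
  rw [aaV22, eeV22] at h
  norm_num at h
  exact h

lemma eeV24 : ee 24 = (2061249836919818029805/9903520314283042199192993792 : ℝ) := by
  have h := ee_step 22
  rw [aaV23, eeV23] at h
  norm_num at h
  exact h

lemma eeV25 : ee 25 = (11595958499335100563255/79228162514264337593543950336 : ℝ) := by
  have h := ee_step 23
  rw [aaV24, eeV24] at h
  norm_num at h
  exact h

lemma eeV26 : ee 26 = (130817157162946270915939/1267650600228229401496703205376 : ℝ) := by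
  have h := ee_step 24
  rw [aaV25, eeV25] at h
  norm_num at h
  exact h

lemma eeV27 : ee 27 = (46231042142055483065117/633825300114114700748351602688 : ℝ) := by
  have h := ee_step 25
  rw [aaV26, eeV26] at h
  norm_num at h
  exact h

lemma eeV28 : ee 28 = (16768058499835929664430881/324518553658426726783156020576256 : ℝ) := by
  have h := ee_step 26
  rw [aaV27, eeV27] at h
  norm_num at h
  exact h

lemma eeV29 : ee 29 = (47613511842579472462699135/1298074214633706907132624082305024 : ℝ) := by
  have h := ee_step 27
  rw [aaV28, eeV28] at h
  norm_num at h
  exact h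

lemma eeV30 : ee 30 = (2167413158545111125605427715/83076749736557242056487941267521536 : ℝ) := by
  have h := ee_step 28
  rw [aaV29, eeV29] at h
  norm_num at h
  exact h

lemma eeV31 : ee 31 = (49420782996305046482497404743/2658455991569831745807614120560689152 : ℝ) := by
  have h := ee_step 29
  rw [aaV30, eeV30] at h
  norm_num at h
  exact h

lemma eeV32 : ee 32 = (1128787051766079198244496317201/85070591730234615865843651857942052864 : ℝ) := by
  have h := ee_step 30
  rw [aaV31, eeV31] at h
  norm_num at h
  exact h

lemma eeV33 : ee 33 = (6455679292105865099971371268067/680564733841876926926749214863536422912 : ℝ) := by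
  have h := ee_step 31
  rw [aaV32, eeV32] at h
  norm_num at h
  exact h

lemma eeV34 : ee 34 = (73951467893580749026477442890355/10889035741470030830827987437816582766592 : ℝ) := by
  have h := ee_step 32
  rw [aaV33, eeV33] at h
  norm_num at h
  exact h

lemma eeV35 : ee 35 = (212079080781369581480665467613055/43556142965880123323311949751266331066368 : ℝ) := by
  have h := ee_step 33
  rw [aaV34, eeV34] at h
  norm_num at h
  exact h

lemma eeV36 : ee 36 = (9744053465381604196331013005995427/2787593149816327892691964784081045188247552 : ℝ) := by
  have h := ee_step 34
  rw [aaV35, eeV35] at h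
  norm_num at h
  exact h

lemma eeV37 : ee 37 = (56031203488584573266848224410524981/22300745198530623141535718272648361505980416 : ℝ) := by
  have h := ee_step 35
  rw [aaV36, eeV36] at h
  norm_num at h
  exact h

lemma Dnn0 : ee 0 ≤ (aa 0)^2 := by rw [aa_zero, ee_zero]; norm_num

lemma Dnn1 : ee 1 ≤ (aa 1)^2 := by rw [aaV1, eeV1]; norm_num

lemma Dnn2 : ee 2 ≤ (aa 2)^2 := by rw [aaV2, eeV2]; norm_num

lemma Dnn3 : ee 3 ≤ (aa 3)^2 := by rw [aaV3, eeV3]; norm_num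

lemma Dnn4 : ee 4 ≤ (aa 4)^2 := by rw [aaV4, eeV4]; norm_num

lemma Dnn5 : ee 5 ≤ (aa 5)^2 := by rw [aaV5, eeV5]; norm_num

lemma Dnn6 : ee 6 ≤ (aa 6)^2 := by rw [aaV6, eeV6]; norm_num

lemma Dnn7 : ee 7 ≤ (aa 7)^2 := by rw [aaV7, eeV7]; norm_num

lemma Dnn8 : ee 8 ≤ (aa 8)^2 := by rw [aaV8, eeV8]; norm_num

lemma Dnn9 : ee 9 ≤ (aa 9)^2 := by rw [aaV9, eeV9]; norm_num

lemma Dnn10 : ee 10 ≤ (aa 10)^2 := by rw [aaV10, eeV10]; norm_num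

lemma Dnn11 : ee 11 ≤ (aa 11)^2 := by rw [aaV11, eeV11]; norm_num

lemma Dnn12 : ee 12 ≤ (aa 12)^2 := by rw [aaV12, eeV12]; norm_num

lemma Dnn13 : ee 13 ≤ (aa 13)^2 := by rw [aaV13, eeV13]; norm_num

lemma Dnn14 : ee 14 ≤ (aa 14)^2 := by rw [aaV14, eeV14]; norm_num

lemma Dnn15 : ee 15 ≤ (aa 15)^2 := by rw [aaV15, eeV15]; norm_num

lemma Dnn16 : ee 16 ≤ (aa 16)^2 := by rw [aaV16, eeV16]; norm_num

lemma Dnn17 : ee 17 ≤ (aa 17)^2 := by rw [aaV17, eeV17]; norm_num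

lemma Dnn18 : ee 18 ≤ (aa 18)^2 := by rw [aaV18, eeV18]; norm_num

lemma Dnn19 : ee 19 ≤ (aa 19)^2 := by rw [aaV19, eeV19]; norm_num

lemma Dnn20 : ee 20 ≤ (aa 20)^2 := by rw [aaV20, eeV20]; norm_num

lemma Dnn21 : ee 21 ≤ (aa 21)^2 := by rw [aaV21, eeV21]; norm_num

lemma Dnn22 : ee 22 ≤ (aa 22)^2 := by rw [aaV22, eeV22]; norm_num

lemma Dnn23 : ee 23 ≤ (aa 23)^2 := by rw [aaV23, eeV23]; norm_num

lemma Dnn24 : ee 24 ≤ (aa 24)^2 := by rw [aaV24, eeV24]; norm_num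

lemma Dnn25 : ee 25 ≤ (aa 25)^2 := by rw [aaV25, eeV25]; norm_num

lemma Dnn26 : ee 26 ≤ (aa 26)^2 := by rw [aaV26, eeV26]; norm_num

lemma Dnn27 : ee 27 ≤ (aa 27)^2 := by rw [aaV27, eeV27]; norm_num

lemma Dnn28 : ee 28 ≤ (aa 28)^2 := by rw [aaV28, eeV28]; norm_num

lemma Dnn29 : ee 29 ≤ (aa 29)^2 := by rw [aaV29, eeV29]; norm_num

lemma Dnn30 : ee 30 ≤ (aa 30)^2 := by rw [aaV30, eeV30]; norm_num

lemma Dnn31 : ee 31 ≤ (aa 31)^2 := by rw [aaV31, eeV31]; norm_num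

lemma Dnn32 : ee 32 ≤ (aa 32)^2 := by rw [aaV32, eeV32]; norm_num

lemma Dnn33 : ee 33 ≤ (aa 33)^2 := by rw [aaV33, eeV33]; norm_num

lemma Dnn34 : ee 34 ≤ (aa 34)^2 := by rw [aaV34, eeV34]; norm_num

lemma Dnn35 : ee 35 ≤ (aa 35)^2 := by rw [aaV35, eeV35]; norm_num

lemma Dnn36 : ee 36 ≤ (aa 36)^2 := by rw [aaV36, eeV36]; norm_num

lemma D_zero {n : ℕ} (h : n ≤ 4) : (aa n)^2 - ee n = 0 := by
  interval_cases n
  · rw [aa_zero, ee_zero]; norm_num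
  · rw [aaV1, eeV1]; norm_num
  · rw [aaV2, eeV2]; norm_num
  · rw [aaV3, eeV3]; norm_num
  · rw [aaV4, eeV4]; norm_num

lemma D_five : (aa 5)^2 - ee 5 = 3/2^17 := by rw [aaV5, eeV5]; norm_num

lemma D_six : (aa 6)^2 - ee 6 = 79/2^21 := by rw [aaV6, eeV6]; norm_num

lemma abs_ee_tail : ∀ n, 5 ≤ n → |ee n| ≤ (1/23) * (3/4)^n := by
  intro n hn
  induction n, hn using Nat.le_induction with
  | base =>
    rw [eeV5, abs_of_pos (by norm_num)]
    norm_num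
  | succ n hn ih =>
    obtain ⟨m, rfl⟩ : ∃ m, n = m+1 := ⟨n-1, by omega⟩
    rw [ee_step]
    have h1 : |aa (m+1)| ≤ 1/2 := by
      rw [abs_of_pos (aa_pos (by omega))]; exact aa_le_half (by omega)
    have h2 : (0:ℝ) < (3/4)^(m+1) := by positivity
    have habs : |2 * aa (m+1) * (3/4)^(m+1)| = 2 * |aa (m+1)| * (3/4)^(m+1) := by
      rw [abs_mul, abs_mul, show |(2:ℝ)| = 2 by norm_num, abs_of_pos h2]
    calc |(2 * aa (m+1) * (3/4)^(m+1) - ee (m+1)) / 32|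
        ≤ (|2 * aa (m+1) * (3/4)^(m+1)| + |ee (m+1)|) / 32 := by
          rw [abs_div, show |(32:ℝ)| = 32 by norm_num]
          exact div_le_div_of_nonneg_right (abs_sub _ _) (by norm_num)
      _ ≤ ((3/4)^(m+1) + (1/23) * (3/4)^(m+1)) / 32 := by
          apply div_le_div_of_nonneg_right ?_ (by norm_num)
          rw [habs]
          nlinarith [h1, h2, ih]
      _ = (1/23) * (3/4)^(m+1+1) := by
          rw [pow_succ]
          ring
  
lemma tail_aa_sq : ∀ n, 37 ≤ n → (1/23) * (3/4)^n ≤ (aa n)^2 := by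
  intro n hn
  induction n, hn using Nat.le_induction with
  | base =>
    rw [aaV37]
    norm_num
  | succ n hn ih =>
    have hn' : (37:ℝ) ≤ (n:ℝ) := by exact_mod_cast hn
    have key : (3/4) * (2*(n:ℝ)+2)^2 ≤ (2*(n:ℝ)-1)^2 := by nlinarith [hn']
    have hrec := aa_rec n
    have h2 : (2*(n:ℝ)+2)^2 * (aa (n+1))^2 = (2*(n:ℝ)-1)^2 * (aa n)^2 := by
      linear_combination ((2*(n:ℝ)+2) * aa (n+1) + (2*(n:ℝ)-1) * aa n) * hrec
    have hp : (0:ℝ) < (3/4)^n := by positivity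
    have hq : (0:ℝ) < (2*(n:ℝ)+2)^2 := by positivity
    rw [pow_succ]
    rw [show (1:ℝ)/23 * ((3/4)^n * (3/4)) = (3/4) * ((1/23) * (3/4)^n) by ring]
    rw [← le_div_iff₀' ?pos] at ih
    case pos => positivity
    nlinarith [ih, key, h2, hp, hq, sq_nonneg (aa n), sq_nonneg (aa (n+1))]
lemma D_nonneg (n : ℕ) : ee n ≤ (aa n)^2 := by
  rcases le_or_gt n 36 with h | h
  · interval_cases n <;>
      first
        | exact Dnn0
        | exact Dnn1
        | exact Dnn2
        | exact Dnn3
        | exact Dnn4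
        | exact Dnn5
        | exact Dnn6
        | exact Dnn7
        | exact Dnn8
        | exact Dnn9
        | exact Dnn10
        | exact Dnn11
        | exact Dnn12
        | exact Dnn13
        | exact Dnn14
        | exact Dnn15
        | exact Dnn16
        | exact Dnn17
        | exact Dnn18
        | exact Dnn19
        | exact Dnn20
        | exact Dnn21
        | exact Dnn22
        | exact Dnn23
        | exact Dnn24
        | exact Dnn25
        | exact Dnn26
        | exact Dnn27
        | exact Dnn28
        | exact Dnn29
        | exact Dnn30
        | exact Dnn31
        | exact Dnn32
        | exact Dnn33
        | exact Dnn34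
        | exact Dnn35
        | exact Dnn36
  · calc ee n ≤ |ee n| := le_abs_self _
      _ ≤ (1/23) * (3/4)^n := abs_ee_tail n (by omega)
      _ ≤ (aa n)^2 := tail_aa_sq n (by omega)

lemma summable_aa_sq : Summable (fun n => (aa n)^2) := by
  rw [← summable_nat_add_iff 1]
  refine Summable.of_nonneg_of_le (fun n => sq_nonneg _) (fun n => ?_) summable_aa_succ
  have h1 := aa_pos (n := n+1) (by omega)
  have h2 := aa_le_half (n := n+1) (by omega)
  nlinarith

lemma W_aa (n : ℕ) :
    Real.Wallis.W n * ((aa n)^2 * ((2*(n:ℝ)-1)^2 * (2*(n:ℝ)+1))) = 1 := by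
  induction n with
  | zero =>
    have : Real.Wallis.W 0 = 1 := by simp [Real.Wallis.W]
    rw [this, aa_zero]
    norm_num
  | succ n ih =>
    rw [Real.Wallis.W_succ]
    have hrec := aa_rec n
    have h2 : (2*(n:ℝ)+2)^2 * (aa (n+1))^2 = (2*(n:ℝ)-1)^2 * (aa n)^2 := by
      linear_combination ((2*(n:ℝ)+2) * aa (n+1) + (2*(n:ℝ)-1) * aa n) * hrec
    have hne1 : (2*(n:ℝ)+1) ≠ 0 := by positivity
    have hne3 : (2*(n:ℝ)+3) ≠ 0 := by positivity
    push_cast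
    field_simp
    linear_combination ((2*(n:ℝ)+1)^2*(2*(n:ℝ)+3) * Real.Wallis.W n) * h2
      + ((2*(n:ℝ)+1)*(2*(n:ℝ)+3)) * ih

lemma tendsto_partial_sums : Filter.Tendsto (fun n : ℕ => ∑ k ∈ Finset.range n, (aa k)^2)
    Filter.atTop (nhds (4/π)) := by
  have hWinv : Filter.Tendsto (fun n => (Real.Wallis.W n)⁻¹) Filter.atTop (nhds (2/π)) := by
    have h := (Real.Wallis.tendsto_W_nhds_pi_div_two).inv₀ (by positivity : (π/2) ≠ 0)
    have heq : (π/2)⁻¹ = 2/π := by rw [inv_div]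
    rwa [heq] at h
  have hq : Filter.Tendsto (fun n : ℕ => 4*((4:ℝ)-3*(1/(n:ℝ)))/((2-1/(n:ℝ))^2*(2+1/(n:ℝ))))
      Filter.atTop (nhds 2) := by
    have hcont : ContinuousAt (fun u : ℝ => 4*(4-3*u)/((2-u)^2*(2+u))) 0 := by
      apply ContinuousAt.div
      · fun_prop
      · fun_prop
      · norm_num
    have h := hcont.tendsto.comp tendsto_one_div_atTop_nhds_zero_nat
    have h0 : (4:ℝ)*(4-3*0)/((2-0)^2*(2+0)) = 2 := by norm_num
    rw [h0] at h
    exact h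
  have hmul := hq.mul hWinv
  have h4 : (2:ℝ) * (2/π) = 4/π := by ring
  rw [h4] at hmul
  apply Filter.Tendsto.congr' ?_ hmul
  rw [Filter.eventuallyEq_iff_exists_mem]
  refine ⟨{n | 1 ≤ n}, Filter.mem_atTop 1, ?_⟩
  intro n hn
  have hn1 : 1 ≤ n := hn
  have hn0 : (n:ℝ) ≠ 0 := by
    have : (1:ℝ) ≤ (n:ℝ) := by exact_mod_cast hn1
    linarith
  simp only
  rw [sum_range_aa_sq]
  have hWa := W_aa n
  have hWpos := Real.Wallis.W_pos n
  have h1 := two_n_sub_one_ne n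
  have h3 : (2*(n:ℝ)+1) ≠ 0 := by positivity
  have haan : (aa n)^2 = (Real.Wallis.W n)⁻¹ * ((2*(n:ℝ)-1)^2 * (2*(n:ℝ)+1))⁻¹ := by
    field_simp
    linear_combination hWa
  rw [haan]
  field_simp

lemma hasSum_aa_sq : HasSum (fun n => (aa n)^2) (4/π) := by
  have hs := summable_aa_sq
  have h1 := hs.hasSum.tendsto_sum_nat
  have h2 := tendsto_nhds_unique h1 tendsto_partial_sums
  rw [← h2]
  exact hs.hasSum

lemma Afun_one : Afun 1 = 14/11 := by
  rw [Afun]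
  rw [show (4:ℝ) - 3*1 = 1 by norm_num, Real.sqrt_one]
  norm_num

lemma hasSum_Bfun {x : ℝ} (h0 : 0 ≤ x) (h1 : x ≤ 1) :
    HasSum (fun n => (aa n)^2 * x^n) (Bfun x) := by
  have hsble : Summable (fun n => (aa n)^2 * x^n) := by
    refine Summable.of_nonneg_of_le (fun n => by positivity) (fun n => ?_) summable_aa_sq
    calc (aa n)^2 * x^n ≤ (aa n)^2 * 1 := by
          apply mul_le_mul_of_nonneg_left ?_ (sq_nonneg _)
          exact pow_le_one₀ h0 h1
      _ = (aa n)^2 := mul_one _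
  exact hsble.hasSum

lemma hasSum_D_one : HasSum (fun n => (aa n)^2 - ee n) (4/π - 14/11) := by
  have he : HasSum ee (14/11) := by
    have h := hasSum_ee_Afun (le_refl (0:ℝ) |>.trans zero_le_one) le_rfl
    rw [Afun_one] at h
    simpa using h
  exact hasSum_aa_sq.sub he

theorem accuracy_lemma :
    (∀ x : ℝ, 0 < x → x ≤ 1 →
        (3 / 2 ^ 17) * x ^ 5 < Bfun x - Afun x ∧
        Bfun x - Afun x ≤ (4 / Real.pi - 14 / 11) * x ^ 5) ∧
    Bfun 1 - Afun 1 = 4 / Real.pi - 14 / 11 := by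
  constructor
  · intro x hx0 hx1
    have hB := hasSum_Bfun hx0.le hx1
    have hA := hasSum_ee_Afun hx0.le hx1
    have hD : HasSum (fun n => ((aa n)^2 - ee n) * x^n) (Bfun x - Afun x) := by
      have h := hB.sub hA
      have hfe : (fun n => (aa n)^2 * x^n - ee n * x^n)
          = fun n => ((aa n)^2 - ee n) * x^n := by
        funext n; ring
      rwa [hfe] at h
    have hDnn : ∀ n : ℕ, 0 ≤ ((aa n)^2 - ee n) * x^n := fun n =>
      mul_nonneg (sub_nonneg.2 (D_nonneg n)) (pow_nonneg hx0.le n)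
    constructor
    · have hsub := sum_le_hasSum ({5, 6} : Finset ℕ) (fun n _ => hDnn n) hD
      rw [Finset.sum_pair (by norm_num : (5:ℕ) ≠ 6)] at hsub
      rw [D_five, D_six] at hsub
      have hx6 : 0 < x^6 := by positivity
      calc (3/2^17) * x^5 < 3/2^17 * x^5 + 79/2^21 * x^6 := by nlinarith
        _ ≤ Bfun x - Afun x := hsub
    · have hC : HasSum (fun n => ((aa n)^2 - ee n) * x^5) ((4/π - 14/11) * x^5) :=
        hasSum_D_one.mul_right _
      refine hasSum_le (fun n => ?_) hD hC
      rcases le_or_gt n 4 with h | h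
      · rw [D_zero h, zero_mul, zero_mul]
      · apply mul_le_mul_of_nonneg_left ?_ (sub_nonneg.2 (D_nonneg n))
        exact pow_le_pow_of_le_one hx0.le hx1 (by omega)
  · have hb1 : Bfun 1 = 4/π := by
      have h := hasSum_Bfun (zero_le_one) le_rfl
      have h' : HasSum (fun n => (aa n)^2 * 1^n) (4/π) := by simpa using hasSum_aa_sq
      exact h.unique h'
    rw [hb1, Afun_one]
end

section
/- For all real numbers a, b with a ≥ b > 0, the perimeter of the ellipse admits the series representation p(a,b) = π·(a+b)·B(((a−b)/(a+b))²), and Ramanujan's approximation satisfies p_R(a,b) = π·(a+b)·A(((a−b)/(a+b))²). -/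
open Real

/-- The perimeter of an ellipse with semi-axes `a ≥ b > 0`. -/
noncomputable def ellipsePerimeter (a b : ℝ) : ℝ :=
  4 * ∫ φ in (0:ℝ)..(Real.pi / 2), Real.sqrt (a ^ 2 * Real.sin φ ^ 2 + b ^ 2 * Real.cos φ ^ 2)

/-- Ramanujan's approximation to the perimeter of an ellipse. -/
noncomputable def ramanujanPerimeter (a b : ℝ) : ℝ :=
  Real.pi * ((a + b) + 3 * (a - b) ^ 2 / (10 * (a + b) + Real.sqrt (a ^ 2 + 14 * a * b + b ^ 2)))

open Finset


/-- coefficient sequence -/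
noncomputable def cc (n : ℕ) : ℝ :=
  (1 / (2 * (n : ℝ) - 1)) * (1 / 4 ^ n) * (Nat.choose (2 * n) n)

lemma cc_zero : cc 0 = -1 := by
  simp [cc]

lemma centralBinom_succ_eq (n : ℕ) :
    Nat.centralBinom (n + 1) = 2 * (2 * n + 1) * catalan n := by
  have h1 := Nat.succ_mul_centralBinom_succ n
  have h2 := succ_mul_catalan_eq_centralBinom n
  have : (n + 1) * Nat.centralBinom (n + 1) = (n + 1) * (2 * (2 * n + 1) * catalan n) := by
    rw [h1, ← h2]; ring
  exact Nat.eq_of_mul_eq_mul_left (Nat.succ_pos n) this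

lemma cc_succ (n : ℕ) : cc (n + 1) = 2 * catalan n / 4 ^ (n + 1) := by
  have h : Nat.choose (2 * (n + 1)) (n + 1) = Nat.centralBinom (n + 1) :=
    (Nat.centralBinom_eq_two_mul_choose (n + 1)).symm
  rw [cc, h, centralBinom_succ_eq]
  have h2 : (2 * ((n : ℝ) + 1) - 1) ≠ 0 := by
    have : (0:ℝ) ≤ (n:ℝ) := n.cast_nonneg
    intro h; nlinarith
  push_cast
  field_simp
  ring

lemma catalan_le_four_pow (n : ℕ) : catalan n ≤ 4 ^ n := by
  have h1 : catalan n ≤ Nat.centralBinom n := by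
    calc catalan n ≤ (n + 1) * catalan n := Nat.le_mul_of_pos_left _ (Nat.succ_pos n)
    _ = Nat.centralBinom n := succ_mul_catalan_eq_centralBinom n
  refine h1.trans ?_
  have h2 : Nat.centralBinom n ≤ ∑ m ∈ range (2 * n + 1), Nat.choose (2 * n) m :=
    Finset.single_le_sum (f := fun m => Nat.choose (2 * n) m) (fun _ _ => Nat.zero_le _)
      (Finset.mem_range.mpr (by omega))
  rw [Nat.sum_range_choose, pow_mul] at h2
  norm_num at h2 ⊢
  exact h2

lemma abs_cc_le_one (n : ℕ) : |cc n| ≤ 1 := by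
  cases n with
  | zero => simp [cc_zero]
  | succ m =>
    rw [cc_succ]
    have h1 : (0:ℝ) ≤ 2 * catalan m / 4 ^ (m + 1) := by positivity
    rw [abs_of_nonneg h1]
    rw [div_le_one (by positivity)]
    have := catalan_le_four_pow m
    have h2 : (catalan m : ℝ) ≤ 4 ^ m := by exact_mod_cast this
    calc 2 * (catalan m : ℝ) ≤ 2 * 4 ^ m := by linarith
    _ ≤ 4 ^ (m + 1) := by rw [pow_succ]; nlinarith [pow_pos (by norm_num : (0:ℝ) < 4) m]

lemma cc_one : cc 1 = 1 / 2 := by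
  rw [show cc 1 = cc (0 + 1) from rfl, cc_succ]; norm_num

lemma cc_conv (n : ℕ) :
    ∑ p ∈ Finset.HasAntidiagonal.antidiagonal n, cc p.1 * cc p.2 =
      if n = 0 then 1 else if n = 1 then -1 else 0 := by
  match n with
  | 0 => simp [cc_zero]
  | 1 => norm_num [Finset.Nat.sum_antidiagonal_eq_sum_range_succ_mk, Finset.sum_range_succ, cc_zero, cc_one]
  | (m + 2) =>
    rw [Finset.Nat.sum_antidiagonal_eq_sum_range_succ_mk]
    simp only [Nat.succ_ne_zero, if_false, Nat.succ_ne_self]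
    rw [Finset.sum_range_succ', Finset.sum_range_succ]
    have hmid : ∀ i ∈ range (m + 1),
        cc (i + 1) * cc (m + 2 - (i + 1)) = 4 * (catalan i * catalan (m - i)) / 4 ^ (m + 2) := by
      intro i hi
      have hi' : i ≤ m := Nat.lt_succ_iff.mp (Finset.mem_range.mp hi)
      have h1 : m + 2 - (i + 1) = (m - i) + 1 := by omega
      rw [h1, cc_succ, cc_succ]
      have hpow : (4:ℝ) ^ (i + 1) * 4 ^ (m - i + 1) = 4 ^ (m + 2) := by
        rw [← pow_add]; congr 1; omega
      field_simp
      rw [← hpow]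
      ring
    rw [Finset.sum_congr rfl hmid]
    rw [← Finset.sum_div, ← Finset.mul_sum]
    have hcat : ∑ i ∈ range (m + 1), (catalan i * catalan (m - i) : ℝ) = catalan (m + 1) := by
      rw [catalan_succ m]
      push_cast [Finset.sum_range (fun i => (catalan i : ℝ) * (catalan (m - i) : ℝ))]
      norm_cast
    rw [hcat]
    have h0 : m + 2 - (m + 1 + 1) = 0 := by omega
    rw [h0]
    rw [Nat.sub_zero, cc_zero, cc_succ]
    have : (m + 2 : ℕ) = (m + 1) + 1 := rfl
    rw [this, if_neg (by omega : ¬ m + 1 + 1 = 1)]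
    ring

lemma summable_cc_norm {z : ℂ} (hz : ‖z‖ < 1) :
    Summable (fun n : ℕ => ‖(cc n : ℂ) * z ^ n‖) := by
  refine Summable.of_nonneg_of_le (fun n => norm_nonneg _) (fun n => ?_)
    (summable_geometric_of_lt_one (norm_nonneg z) hz)
  rw [norm_mul, norm_pow, Complex.norm_real, Real.norm_eq_abs]
  have h1 : |cc n| * ‖z‖ ^ n ≤ 1 * ‖z‖ ^ n :=
    mul_le_mul_of_nonneg_right (abs_cc_le_one n) (by positivity)
  simpa using h1

lemma sq_S {z : ℂ} (hz : ‖z‖ < 1) :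
    (∑' n : ℕ, (cc n : ℂ) * z ^ n) * (∑' n : ℕ, (cc n : ℂ) * z ^ n) = 1 - z := by
  rw [tsum_mul_tsum_eq_tsum_sum_antidiagonal_of_summable_norm
    (summable_cc_norm hz) (summable_cc_norm hz)]
  have hterm : ∀ n : ℕ,
      (∑ p ∈ Finset.HasAntidiagonal.antidiagonal n, ((cc p.1 : ℂ) * z ^ p.1) * ((cc p.2 : ℂ) * z ^ p.2))
      = (if n = 0 then 1 else if n = 1 then -1 else 0) * z ^ n := by
    intro n
    have h : ∀ p ∈ Finset.HasAntidiagonal.antidiagonal n,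
        ((cc p.1 : ℂ) * z ^ p.1) * ((cc p.2 : ℂ) * z ^ p.2)
          = ((cc p.1 * cc p.2 : ℝ) : ℂ) * z ^ n := by
      intro p hp
      have hpn : p.1 + p.2 = n := Finset.HasAntidiagonal.mem_antidiagonal.mp hp
      rw [← hpn, pow_add]
      push_cast
      ring
    rw [Finset.sum_congr rfl h, ← Finset.sum_mul, ← Complex.ofReal_sum, cc_conv]
    split_ifs <;> norm_num
  rw [tsum_congr hterm]
  rw [tsum_eq_sum (s := ({0, 1} : Finset ℕ)) ?_]
  · norm_num
    ring
  · intro n hn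
    have h0 : n ≠ 0 := by intro h; exact hn (by simp [h])
    have h1 : n ≠ 1 := by intro h; exact hn (by simp [h])
    simp [h0, h1]

lemma integral_cos_int_ne {n m : ℕ} (h : n ≠ m) :
    ∫ θ in (0:ℝ)..π, Real.cos (((n : ℝ) - m) * θ) = 0 := by
  have hc : ((n : ℝ) - m) ≠ 0 := by
    have : (n : ℝ) ≠ (m : ℝ) := by exact_mod_cast h
    exact sub_ne_zero.mpr this
  rw [intervalIntegral.integral_comp_mul_left Real.cos hc]
  have hj : ((n : ℝ) - m) * π = ((n : ℤ) - m : ℤ) * π := by push_cast; ring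
  simp only [mul_zero, integral_cos, Real.sin_zero, hj, Real.sin_int_mul_pi, sub_zero,
    smul_eq_mul, mul_zero]

set_option maxHeartbeats 2000000 in
lemma key_integral {k : ℝ} (hk0 : 0 ≤ k) (hk1 : k < 1) :
    ∫ θ in (0:ℝ)..π, Real.sqrt (1 + k ^ 2 - 2 * k * Real.cos θ)
      = π * ∑' n : ℕ, cc n ^ 2 * (k ^ 2) ^ n := by
  set F : ℕ × ℕ → ℝ → ℝ :=
    fun p θ => cc p.1 * cc p.2 * k ^ (p.1 + p.2) * Real.cos ((p.1 : ℝ) * θ - (p.2 : ℝ) * θ)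
    with hF
  -- pointwise series representation of the square root
  have hpoint : ∀ θ : ℝ, Real.sqrt (1 + k ^ 2 - 2 * k * Real.cos θ) = ∑' p : ℕ × ℕ, F p θ := by
    intro θ
    set z : ℂ := (k : ℂ) * Complex.exp ((θ : ℝ) * Complex.I) with hz
    have hznorm : ‖z‖ = k := by
      rw [hz, norm_mul, Complex.norm_real, Real.norm_eq_abs, abs_of_nonneg hk0,
        Complex.norm_exp_ofReal_mul_I, mul_one]
    have hz1 : ‖z‖ < 1 := by rwa [hznorm]
    have hf := summable_cc_norm hz1
    have hg : Summable (fun n : ℕ => ‖(starRingEnd ℂ) ((cc n : ℂ) * z ^ n)‖) := by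
      simpa using hf
    set S : ℂ := ∑' n : ℕ, (cc n : ℂ) * z ^ n with hS
    have hconj : (starRingEnd ℂ) S = ∑' n : ℕ, (starRingEnd ℂ) ((cc n : ℂ) * z ^ n) :=
      Complex.conj_tsum _
    have hSS : S * (starRingEnd ℂ) S
        = ∑' p : ℕ × ℕ, ((cc p.1 : ℂ) * z ^ p.1) * (starRingEnd ℂ) ((cc p.2 : ℂ) * z ^ p.2) := by
      rw [hconj, hS]
      exact tsum_mul_tsum_of_summable_norm (f := fun n : ℕ => (cc n : ℂ) * z ^ n)
        (g := fun n : ℕ => (starRingEnd ℂ) ((cc n : ℂ) * z ^ n)) hf hg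
    have hzp : ∀ n : ℕ, z ^ n = ((k ^ n : ℝ) : ℂ) * Complex.exp ((((n : ℝ) * θ : ℝ)) * Complex.I) := by
      intro n
      rw [hz, mul_pow, ← Complex.exp_nat_mul]
      push_cast
      ring_nf
    have hterm : ∀ p : ℕ × ℕ, ((cc p.1 : ℂ) * z ^ p.1) * (starRingEnd ℂ) ((cc p.2 : ℂ) * z ^ p.2)
        = ((cc p.1 * cc p.2 * k ^ (p.1 + p.2) : ℝ) : ℂ)
            * Complex.exp ((((p.1 : ℝ) * θ - (p.2 : ℝ) * θ : ℝ)) * Complex.I) := by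
      intro p
      rw [hzp p.1, hzp p.2, map_mul, map_mul, Complex.conj_ofReal, Complex.conj_ofReal,
        ← Complex.exp_conj]
      have hconjarg : (starRingEnd ℂ) ((((p.2 : ℝ) * θ : ℝ)) * Complex.I)
          = -((((p.2 : ℝ) * θ : ℝ)) * Complex.I) := by
        simp [Complex.conj_ofReal]
      rw [hconjarg]
      rw [show ((cc p.1 : ℂ) * (((k ^ p.1 : ℝ) : ℂ) * Complex.exp ((((p.1 : ℝ) * θ : ℝ)) * Complex.I)))
          * ((cc p.2 : ℂ) * (((k ^ p.2 : ℝ) : ℂ) * Complex.exp (-((((p.2 : ℝ) * θ : ℝ)) * Complex.I))))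
        = ((cc p.1 : ℂ) * (cc p.2 : ℂ) * ((k ^ p.1 : ℝ) : ℂ) * ((k ^ p.2 : ℝ) : ℂ))
            * (Complex.exp ((((p.1 : ℝ) * θ : ℝ)) * Complex.I)
              * Complex.exp (-((((p.2 : ℝ) * θ : ℝ)) * Complex.I))) from by ring]
      rw [← Complex.exp_add]
      have harg : (((p.1 : ℝ) * θ : ℝ) : ℂ) * Complex.I + -((((p.2 : ℝ) * θ : ℝ)) * Complex.I)
          = (((p.1 : ℝ) * θ - (p.2 : ℝ) * θ : ℝ) : ℂ) * Complex.I := by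
        push_cast
        ring
      rw [harg]
      push_cast [pow_add]
      ring
    have hsum2 : Summable (fun p : ℕ × ℕ =>
        ((cc p.1 : ℂ) * z ^ p.1) * (starRingEnd ℂ) ((cc p.2 : ℂ) * z ^ p.2)) :=
      summable_mul_of_summable_norm (f := fun n : ℕ => (cc n : ℂ) * z ^ n)
        (g := fun n : ℕ => (starRingEnd ℂ) ((cc n : ℂ) * z ^ n)) hf hg
    have hre : (S * (starRingEnd ℂ) S).re = ∑' p : ℕ × ℕ, F p θ := by
      rw [hSS, Complex.re_tsum hsum2]
      refine tsum_congr fun p => ?_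
      rw [hterm p, Complex.re_ofReal_mul, Complex.exp_ofReal_mul_I_re]
    have hnormSq : (Complex.normSq S : ℝ) = ∑' p : ℕ × ℕ, F p θ := by
      rw [← hre, Complex.mul_conj]
      simp
    have hsq : (Complex.normSq S) ^ 2 = 1 + k ^ 2 - 2 * k * Real.cos θ := by
      have h1 : (Complex.normSq S) ^ 2 = Complex.normSq (S * S) := by
        rw [Complex.normSq_mul]; ring
      rw [hS, sq_S hz1] at h1
      rw [h1, Complex.normSq_apply]
      have hre1 : (1 - z).re = 1 - k * Real.cos θ := by
        rw [hz, Complex.sub_re, Complex.one_re, Complex.re_ofReal_mul,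
          Complex.exp_ofReal_mul_I_re]
      have him1 : (1 - z).im = -(k * Real.sin θ) := by
        rw [hz, Complex.sub_im, Complex.one_im, Complex.im_ofReal_mul,
          Complex.exp_ofReal_mul_I_im]
        ring
      rw [hre1, him1]
      nlinarith [Real.sin_sq_add_cos_sq θ]
    rw [← hnormSq, ← hsq, Real.sqrt_sq (Complex.normSq_nonneg S)]
  -- interchange sum and integral
  have hcont : ∀ p : ℕ × ℕ, Continuous (F p) := by
    intro p
    rw [hF]
    fun_prop
  have hgeo : Summable (fun n : ℕ => |cc n| * k ^ n) := by
    refine Summable.of_nonneg_of_le (fun n => by positivity) (fun n => ?_)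
      (summable_geometric_of_lt_one hk0 hk1)
    have := abs_cc_le_one n
    have hkn : (0:ℝ) ≤ k ^ n := by positivity
    nlinarith
  have hB : Summable (fun p : ℕ × ℕ => (|cc p.1| * k ^ p.1) * (|cc p.2| * k ^ p.2)) :=
    hgeo.mul_of_nonneg hgeo (fun n => by positivity) (fun n => by positivity)
  have hFb : ∀ p : ℕ × ℕ, ∀ θ : ℝ,
      ‖F p θ‖ ≤ (|cc p.1| * k ^ p.1) * (|cc p.2| * k ^ p.2) := by
    intro p θ
    rw [hF]
    simp only [Real.norm_eq_abs]
    rw [abs_mul, abs_mul, abs_mul]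
    have h1 : |Real.cos ((p.1 : ℝ) * θ - (p.2 : ℝ) * θ)| ≤ 1 := Real.abs_cos_le_one _
    have h2 : |k ^ (p.1 + p.2)| = k ^ p.1 * k ^ p.2 := by
      rw [abs_of_nonneg (by positivity), pow_add]
    rw [h2]
    have hnn : (0:ℝ) ≤ |cc p.1| * |cc p.2| * (k ^ p.1 * k ^ p.2) := by positivity
    nlinarith [abs_nonneg (cc p.1), abs_nonneg (cc p.2), pow_nonneg hk0 p.1, pow_nonneg hk0 p.2]
  have hF_int : ∀ p : ℕ × ℕ, MeasureTheory.IntegrableOn (F p) (Set.Ioc 0 π) := fun p =>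
    (hcont p).integrableOn_Ioc
  have hF_sum : Summable (fun p : ℕ × ℕ => ∫ θ in Set.Ioc (0:ℝ) π, ‖F p θ‖) := by
    refine Summable.of_nonneg_of_le
      (fun p => MeasureTheory.integral_nonneg (fun θ => norm_nonneg _)) (fun p => ?_)
      (hB.mul_right π)
    calc ∫ θ in Set.Ioc (0:ℝ) π, ‖F p θ‖
        ≤ ∫ _ in Set.Ioc (0:ℝ) π, (|cc p.1| * k ^ p.1) * (|cc p.2| * k ^ p.2) := by
          refine MeasureTheory.setIntegral_mono_on ((hcont p).norm.integrableOn_Ioc)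
            ((MeasureTheory.integrableOn_const_iff).mpr (Or.inr ?_)) measurableSet_Ioc
            (fun θ _ => hFb p θ)
          rw [Real.volume_Ioc]
          exact ENNReal.ofReal_lt_top
      _ = (|cc p.1| * k ^ p.1) * (|cc p.2| * k ^ p.2) * π := by
          rw [MeasureTheory.setIntegral_const, Real.volume_real_Ioc_of_le Real.pi_pos.le, sub_zero,
            smul_eq_mul]
          ring
  have hswap : ∫ θ in (0:ℝ)..π, Real.sqrt (1 + k ^ 2 - 2 * k * Real.cos θ)
      = ∑' p : ℕ × ℕ, ∫ θ in Set.Ioc (0:ℝ) π, F p θ := by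
    rw [intervalIntegral.integral_of_le Real.pi_pos.le]
    rw [MeasureTheory.integral_congr_ae (Filter.Eventually.of_forall (fun θ => hpoint θ))]
    exact (MeasureTheory.integral_tsum_of_summable_integral_norm hF_int hF_sum).symm
  rw [hswap]
  -- compute each integral
  have hint : ∀ p : ℕ × ℕ, ∫ θ in Set.Ioc (0:ℝ) π, F p θ
      = if p.1 = p.2 then π * (cc p.1 ^ 2 * (k ^ 2) ^ p.1) else 0 := by
    intro p
    rw [← intervalIntegral.integral_of_le Real.pi_pos.le]
    rcases eq_or_ne p.1 p.2 with h | h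
    · rw [if_pos h]
      have heq : ∀ θ ∈ Set.uIcc (0:ℝ) π, F p θ = cc p.1 ^ 2 * (k ^ 2) ^ p.1 := by
        intro θ _
        rw [hF]
        simp only [← h, sub_self, Real.cos_zero, mul_one]
        rw [show p.1 + p.1 = 2 * p.1 from by ring, pow_mul]
        ring_nf
      rw [intervalIntegral.integral_congr heq, intervalIntegral.integral_const, smul_eq_mul,
        sub_zero]
    · rw [if_neg h]
      have heq : ∀ θ ∈ Set.uIcc (0:ℝ) π,
          F p θ = (cc p.1 * cc p.2 * k ^ (p.1 + p.2)) * Real.cos (((p.1 : ℝ) - p.2) * θ) := by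
        intro θ _
        simp only [hF]
        have : (p.1 : ℝ) * θ - (p.2 : ℝ) * θ = ((p.1 : ℝ) - p.2) * θ := by ring
        rw [this]
      rw [intervalIntegral.integral_congr heq, intervalIntegral.integral_const_mul,
        integral_cos_int_ne h, mul_zero]
  rw [tsum_congr hint]
  -- diagonal sum
  have hdiag : ∑' p : ℕ × ℕ, (if p.1 = p.2 then π * (cc p.1 ^ 2 * (k ^ 2) ^ p.1) else 0)
      = ∑' n : ℕ, π * (cc n ^ 2 * (k ^ 2) ^ n) := by
    refine (Function.Injective.tsum_eq (g := fun n : ℕ => ((n, n) : ℕ × ℕ))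
      (fun a b hab => by simpa using congrArg Prod.fst hab) ?_).symm.trans ?_
    · intro p hp
      rcases eq_or_ne p.1 p.2 with h | h
      · exact ⟨p.1, by cases p; simp_all⟩
      · simp [Function.mem_support, if_neg h] at hp
    · refine tsum_congr fun n => ?_
      simp
  rw [hdiag, tsum_mul_left]

theorem perimeter_series_representations (a b : ℝ) (hab : a ≥ b) (hb : b > 0) :
    ellipsePerimeter a b = Real.pi * (a + b) * Bfun (((a - b) / (a + b)) ^ 2) ∧
    ramanujanPerimeter a b = Real.pi * (a + b) * Afun (((a - b) / (a + b)) ^ 2) := by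
  have hab2 : (0:ℝ) < a + b := by linarith
  set k : ℝ := (a - b) / (a + b) with hk
  have hk0 : 0 ≤ k := div_nonneg (by linarith) hab2.le
  have hk1 : k < 1 := by rw [hk, div_lt_one hab2]; linarith
  constructor
  · -- the series representation
    have hpoint : ∀ φ ∈ Set.uIcc (0:ℝ) (π/2), Real.sqrt (a^2 * Real.sin φ^2 + b^2 * Real.cos φ^2)
        = ((a+b)/2) * Real.sqrt (1 + k^2 - 2*k*Real.cos (2*φ)) := by
      intro φ _
      have h1 : a^2 * Real.sin φ^2 + b^2 * Real.cos φ^2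
          = ((a+b)/2)^2 * (1 + k^2 - 2*k*Real.cos (2*φ)) := by
        rw [Real.cos_two_mul]
        have hs : Real.sin φ^2 = 1 - Real.cos φ^2 := by
          nlinarith [Real.sin_sq_add_cos_sq φ]
        rw [hs, hk]
        field_simp
        ring
      rw [h1, Real.sqrt_mul (by positivity), Real.sqrt_sq (by positivity)]
    have hint : ∫ φ in (0:ℝ)..(π/2), Real.sqrt (a^2 * Real.sin φ^2 + b^2 * Real.cos φ^2)
        = ((a+b)/2) * ∫ φ in (0:ℝ)..(π/2), Real.sqrt (1 + k^2 - 2*k*Real.cos (2*φ)) := by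
      rw [← intervalIntegral.integral_const_mul]
      exact intervalIntegral.integral_congr hpoint
    have hcv : ∫ φ in (0:ℝ)..(π/2), Real.sqrt (1 + k^2 - 2*k*Real.cos (2*φ))
        = 2⁻¹ * ∫ θ in (0:ℝ)..π, Real.sqrt (1 + k^2 - 2*k*Real.cos θ) := by
      have h2 := intervalIntegral.integral_comp_mul_left
        (a := 0) (b := π/2) (c := (2:ℝ))
        (fun θ => Real.sqrt (1 + k^2 - 2*k*Real.cos θ)) two_ne_zero
      rw [h2]
      rw [show (2:ℝ) * (π/2) = π from by ring]
      norm_num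
    have hB : Bfun (k^2) = ∑' n : ℕ, cc n ^ 2 * (k ^ 2) ^ n := rfl
    rw [ellipsePerimeter, hint, hcv, key_integral hk0 hk1, hB]
    ring
  · -- Ramanujan's approximation
    have hX : (0:ℝ) ≤ a^2 + 14*a*b + b^2 := by nlinarith
    have h4 : 4 - 3*k^2 = (a^2 + 14*a*b + b^2)/(a+b)^2 := by
      rw [hk]
      field_simp
      ring
    have hsq : Real.sqrt (4 - 3*k^2) = Real.sqrt (a^2 + 14*a*b + b^2) / (a+b) := by
      rw [h4, Real.sqrt_div hX, Real.sqrt_sq hab2.le]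
    rw [ramanujanPerimeter, Afun, show 4 - 3 * k^2 = 4 - 3*k^2 from rfl, hsq]
    have hden : (0:ℝ) < 10*(a+b) + Real.sqrt (a^2 + 14*a*b + b^2) :=
      lt_add_of_pos_of_le (by linarith) (Real.sqrt_nonneg _)
    have hden2 : (0:ℝ) < 10 + Real.sqrt (a^2 + 14*a*b + b^2) / (a+b) := by positivity
    rw [hk]
    field_simp
end
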